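/- arXiv:0704.0622 — 3 statements merged into one kernel-verified Lean document; each statement's English description precedes it below -/
import Mathlib

section
/- If f2 and f3 are homogeneous of degrees 2 and 3 defining a smooth conic and a smooth cubic intersecting transversally, then at each common zero the sextic f3^2 - f2^3 = 0 has an ordinary cusp: in suitable local affine coordinates its equation has the form q1(x,y)^2 - p1(x,y)^3 + (terms of degree ≥ 4) = 0, where p1 and q1 are linearly independent linear forms; equivalently the local singularity is of type A_2. -/
open MvPolynomial

noncomputable section CuspAux

/-- exponent vector (a,b,c) on `Fin 3` -/
def m3 (a b c : ℕ) : Fin 3 →₀ ℕ :=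
  Finsupp.single 0 a + Finsupp.single 1 b + Finsupp.single 2 c

@[simp] lemma m3_apply0 (a b c : ℕ) : m3 a b c 0 = a := by
  simp [m3, Finsupp.single_apply]
@[simp] lemma m3_apply1 (a b c : ℕ) : m3 a b c 1 = b := by
  simp [m3, Finsupp.single_apply]
@[simp] lemma m3_apply2 (a b c : ℕ) : m3 a b c 2 = c := by
  simp [m3, Finsupp.single_apply]

lemma m3_eq_iff {a b c a' b' c' : ℕ} :
    m3 a b c = m3 a' b' c' ↔ a = a' ∧ b = b' ∧ c = c' := by
  constructor
  · intro h
    exact ⟨by simpa using DFunLike.congr_fun h 0, by simpa using DFunLike.congr_fun h 1,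
      by simpa using DFunLike.congr_fun h 2⟩
  · rintro ⟨rfl, rfl, rfl⟩; rfl

lemma eq_m3 (d : Fin 3 →₀ ℕ) : d = m3 (d 0) (d 1) (d 2) := by
  ext i; fin_cases i <;> simp

lemma degree_m3 (a b c : ℕ) : (m3 a b c).degree = a + b + c := by
  rw [Finsupp.degree_apply, Finset.sum_subset (Finset.subset_univ _)
    (by intro i _ hi; simpa using Finsupp.notMem_support_iff.mp hi)]
  rw [Fin.sum_univ_three]; simp

lemma degree_fin2 (d : Fin 2 →₀ ℕ) : d.degree = d 0 + d 1 := by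
  rw [Finsupp.degree_apply, Finset.sum_subset (Finset.subset_univ _)
    (by intro i _ hi; simpa using Finsupp.notMem_support_iff.mp hi)]
  rw [Fin.sum_univ_two]

lemma monomial_m3 (a b c : ℕ) (r : ℂ) :
    monomial (m3 a b c) r = C r * X 0 ^ a * X 1 ^ b * X 2 ^ c := by
  simp [m3, X_pow_eq_monomial, monomial_mul, C_mul_monomial]

lemma hom3_expand (p : MvPolynomial (Fin 3) ℂ) (hp : p.IsHomogeneous 3) :
    p = monomial (m3 3 0 0) (coeff (m3 3 0 0) p) + monomial (m3 2 1 0) (coeff (m3 2 1 0) p)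
      + monomial (m3 1 2 0) (coeff (m3 1 2 0) p) + monomial (m3 0 3 0) (coeff (m3 0 3 0) p)
      + monomial (m3 2 0 1) (coeff (m3 2 0 1) p) + monomial (m3 1 1 1) (coeff (m3 1 1 1) p)
      + monomial (m3 0 2 1) (coeff (m3 0 2 1) p) + monomial (m3 1 0 2) (coeff (m3 1 0 2) p)
      + monomial (m3 0 1 2) (coeff (m3 0 1 2) p) + monomial (m3 0 0 3) (coeff (m3 0 0 3) p) := by
  ext d
  obtain ⟨a, b, c, hdm⟩ : ∃ a b c, d = m3 a b c := ⟨d 0, d 1, d 2, eq_m3 d⟩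
  subst hdm
  simp only [coeff_add, coeff_monomial, m3_eq_iff]
  by_cases h3 : a + b + c = 3
  · have ha : a ≤ 3 := by omega
    have hb : b ≤ 3 := by omega
    have hc : c ≤ 3 := by omega
    interval_cases a <;> interval_cases b <;> interval_cases c <;> simp_all
  · have F : ∀ a' b' c' : ℕ, a' + b' + c' = 3 → ¬(a' = a ∧ b' = b ∧ c' = c) := by
      rintro a' b' c' hs ⟨rfl, rfl, rfl⟩; omega
    rw [hp.coeff_eq_zero (by rw [degree_m3]; omega)]
    rw [if_neg (F 3 0 0 (by norm_num)), if_neg (F 2 1 0 (by norm_num)),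
      if_neg (F 1 2 0 (by norm_num)), if_neg (F 0 3 0 (by norm_num)),
      if_neg (F 2 0 1 (by norm_num)), if_neg (F 1 1 1 (by norm_num)),
      if_neg (F 0 2 1 (by norm_num)), if_neg (F 1 0 2 (by norm_num)),
      if_neg (F 0 1 2 (by norm_num)), if_neg (F 0 0 3 (by norm_num))]
    norm_num

lemma hom2_expand (p : MvPolynomial (Fin 3) ℂ) (hp : p.IsHomogeneous 2) :
    p = monomial (m3 2 0 0) (coeff (m3 2 0 0) p) + monomial (m3 1 1 0) (coeff (m3 1 1 0) p)
      + monomial (m3 0 2 0) (coeff (m3 0 2 0) p) + monomial (m3 1 0 1) (coeff (m3 1 0 1) p)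
      + monomial (m3 0 1 1) (coeff (m3 0 1 1) p) + monomial (m3 0 0 2) (coeff (m3 0 0 2) p) := by
  ext d
  obtain ⟨a, b, c, hdm⟩ : ∃ a b c, d = m3 a b c := ⟨d 0, d 1, d 2, eq_m3 d⟩
  subst hdm
  simp only [coeff_add, coeff_monomial, m3_eq_iff]
  by_cases h3 : a + b + c = 2
  · have ha : a ≤ 2 := by omega
    have hb : b ≤ 2 := by omega
    have hc : c ≤ 2 := by omega
    interval_cases a <;> interval_cases b <;> interval_cases c <;> simp_all
  · have F : ∀ a' b' c' : ℕ, a' + b' + c' = 2 → ¬(a' = a ∧ b' = b ∧ c' = c) := by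
      rintro a' b' c' hs ⟨rfl, rfl, rfl⟩; omega
    rw [hp.coeff_eq_zero (by rw [degree_m3]; omega)]
    rw [if_neg (F 2 0 0 (by norm_num)), if_neg (F 1 1 0 (by norm_num)),
      if_neg (F 0 2 0 (by norm_num)), if_neg (F 1 0 1 (by norm_num)),
      if_neg (F 0 1 1 (by norm_num)), if_neg (F 0 0 2 (by norm_num))]
    norm_num

lemma pderiv_bind₁' (σf : Fin 3 → MvPolynomial (Fin 3) ℂ) (j : Fin 3)
    (f : MvPolynomial (Fin 3) ℂ) :
    pderiv j (bind₁ σf f) = ∑ i : Fin 3, bind₁ σf (pderiv i f) * pderiv j (σf i) := by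
  induction f using MvPolynomial.induction_on with
  | C a => simp
  | add p q hp hq => simp [hp, hq, Finset.sum_add_distrib, add_mul]
  | mul_X p i hp =>
      classical
      simp only [map_mul, bind₁_X_right, pderiv_mul, hp, pderiv_X, map_add,
        apply_ite (bind₁ σf), map_one, map_zero, Pi.single_apply,
        Fin.sum_univ_three]
      fin_cases i <;> simp <;> ring

lemma eval_bind₁' (σf : Fin 3 → MvPolynomial (Fin 3) ℂ) (y : Fin 3 → ℂ)
    (f : MvPolynomial (Fin 3) ℂ) :
    eval y (bind₁ σf f) = eval (fun i => eval y (σf i)) f := by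
  have h1 : eval y (bind₁ σf f) = aeval y (bind₁ σf f) := by
    rw [← coe_aeval_eq_eval]; rfl
  rw [h1, aeval_bind₁]
  rw [show (aeval (fun i => (aeval y) (σf i)) f : ℂ)
      = eval (fun i => aeval y (σf i)) f by rw [← coe_aeval_eq_eval]; rfl]
  congr 1

lemma sum_if_pair (j k : Fin 3) (hjk : j ≠ k) (p q : ℂ) (w : Fin 3 → ℂ) :
    (∑ i : Fin 3, w i * (if i = j then p else if i = k then q else 0)) = w j * p + w k * q := by
  fin_cases j <;> fin_cases k <;> simp_all [Fin.sum_univ_three] <;> ring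

lemma exists_dual_pair (g2 g3 : Fin 3 → ℂ)
    (H : ∀ a b : ℂ, (∀ i, a * g2 i + b * g3 i = 0) → a = 0 ∧ b = 0) :
    ∃ u v : Fin 3 → ℂ,
      (∑ i : Fin 3, g2 i * u i) = 1 ∧ (∑ i : Fin 3, g3 i * u i) = 0 ∧
      (∑ i : Fin 3, g2 i * v i) = 0 ∧ (∑ i : Fin 3, g3 i * v i) = 1 := by
  have hm : ∃ j k : Fin 3, g2 j * g3 k - g2 k * g3 j ≠ 0 := by
    by_contra hc
    push_neg at hc
    have key : ∀ j : Fin 3, g3 j = 0 ∧ g2 j = 0 := by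
      intro j
      have := H (g3 j) (-(g2 j)) (fun i => by linear_combination -(hc j i))
      exact ⟨this.1, by simpa using this.2⟩
    have := H 1 0 (fun i => by simp [(key i).2])
    exact one_ne_zero this.1
  obtain ⟨j, k, hm⟩ := hm
  have hjk : j ≠ k := by rintro rfl; simp at hm
  refine ⟨fun i => if i = j then g3 k / (g2 j * g3 k - g2 k * g3 j)
      else if i = k then -(g3 j) / (g2 j * g3 k - g2 k * g3 j) else 0,
    fun i => if i = j then -(g2 k) / (g2 j * g3 k - g2 k * g3 j)
      else if i = k then g2 j / (g2 j * g3 k - g2 k * g3 j) else 0, ?_, ?_, ?_, ?_⟩ <;>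
    rw [sum_if_pair j k hjk] <;> simp only [mul_div_assoc'] <;> rw [← add_div, div_eq_iff hm] <;> ring

end CuspAux

set_option maxHeartbeats 2000000 in
/-- If `f2`, `f3` are homogeneous of degrees 2 and 3 defining a smooth conic and a
smooth cubic intersecting transversally, then at each common zero the sextic
`f3^2 - f2^3 = 0` has an ordinary cusp: in suitable local affine coordinates its
equation has the form `q1^2 - p1^3 + (terms of degree ≥ 4)`, where `p1` and `q1`
are linearly independent linear forms. -/
theorem sextic_has_ordinary_cusps
    (f2 f3 : MvPolynomial (Fin 3) ℂ)
    (h2 : f2.IsHomogeneous 2) (h3 : f3.IsHomogeneous 3)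
    (hsm2 : ∀ x : Fin 3 → ℂ, x ≠ 0 → eval x f2 = 0 →
      ∃ i : Fin 3, eval x (pderiv i f2) ≠ 0)
    (hsm3 : ∀ x : Fin 3 → ℂ, x ≠ 0 → eval x f3 = 0 →
      ∃ i : Fin 3, eval x (pderiv i f3) ≠ 0)
    (htrans : ∀ x : Fin 3 → ℂ, x ≠ 0 → eval x f2 = 0 → eval x f3 = 0 →
      ∀ a b : ℂ, (∀ i : Fin 3,
          a * eval x (pderiv i f2) + b * eval x (pderiv i f3) = 0) →
        a = 0 ∧ b = 0)
    (x : Fin 3 → ℂ) (hx : x ≠ 0) (hx2 : eval x f2 = 0) (hx3 : eval x f3 = 0) :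
    ∃ e e' : Fin 3 → ℂ, LinearIndependent ℂ ![x, e, e'] ∧
      ∃ p1 q1 h : MvPolynomial (Fin 2) ℂ,
        p1.IsHomogeneous 1 ∧ q1.IsHomogeneous 1 ∧
        (∀ a b : ℂ, a • p1 + b • q1 = 0 → a = 0 ∧ b = 0) ∧
        (∀ d ∈ h.support, 4 ≤ d 0 + d 1) ∧
        (aeval (fun i : Fin 3 => C (x i) + C (e i) * X 0 + C (e' i) * X 1)
            (f3 ^ 2 - f2 ^ 3) : MvPolynomial (Fin 2) ℂ)
          = q1 ^ 2 - p1 ^ 3 + h := by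
  classical
  obtain ⟨e₀, e'', hu2, hu3, hv2, hv3⟩ :=
    exists_dual_pair (fun i => eval x (pderiv i f2)) (fun i => eval x (pderiv i f3))
      (htrans x hx hx2 hx3)
  set σf : Fin 3 → MvPolynomial (Fin 3) ℂ :=
    fun i => C (e₀ i) * X 0 + C (e'' i) * X 1 + C (x i) * X 2 with hσf
  have hσh : ∀ i, (σf i).IsHomogeneous 1 := by
    intro i
    exact ((isHomogeneous_C_mul_X _ _).add (isHomogeneous_C_mul_X _ _)).add
      (isHomogeneous_C_mul_X _ _)
  have hK3 : (bind₁ σf f3).IsHomogeneous 3 := by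
    have := h3.aeval σf hσh; simpa using this
  have hK2 : (bind₁ σf f2).IsHomogeneous 2 := by
    have := h2.aeval σf hσh; simpa using this
  set p001 : Fin 3 → ℂ := fun i => if i = 2 then (1:ℂ) else 0 with hp001
  have hcomp : ∀ q, eval p001 (bind₁ σf q) = eval x q := by
    intro q
    have hfx : (fun i => eval p001 (σf i)) = x := by
      funext i; simp [hσf, hp001]
    rw [eval_bind₁', hfx]
  have hpσ : ∀ j i, pderiv j (σf i) =
      C (if j = 0 then e₀ i else if j = 1 then e'' i else x i) := by
    intro j i
    fin_cases j <;> simp [hσf, pderiv_X, Pi.single_apply]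
  obtain ⟨c300, c210, c120, c030, c201, c111, c021, c102, c012, c003, hE3⟩ :
      ∃ a b c d e f g h i j, bind₁ σf f3
        = C a * X 0 ^ 3 + C b * X 0 ^ 2 * X 1 + C c * X 0 * X 1 ^ 2 + C d * X 1 ^ 3
          + C e * X 0 ^ 2 * X 2 + C f * X 0 * X 1 * X 2 + C g * X 1 ^ 2 * X 2
          + C h * X 0 * X 2 ^ 2 + C i * X 1 * X 2 ^ 2 + C j * X 2 ^ 3 := by
    refine ⟨coeff (m3 3 0 0) (bind₁ σf f3), coeff (m3 2 1 0) (bind₁ σf f3),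
      coeff (m3 1 2 0) (bind₁ σf f3), coeff (m3 0 3 0) (bind₁ σf f3),
      coeff (m3 2 0 1) (bind₁ σf f3), coeff (m3 1 1 1) (bind₁ σf f3),
      coeff (m3 0 2 1) (bind₁ σf f3), coeff (m3 1 0 2) (bind₁ σf f3),
      coeff (m3 0 1 2) (bind₁ σf f3), coeff (m3 0 0 3) (bind₁ σf f3), ?_⟩
    have h' := hom3_expand _ hK3
    simp only [monomial_m3, pow_zero, pow_one, mul_one] at h'
    exact h'
  obtain ⟨b200, b110, b020, b101, b011, b002, hE2⟩ :
      ∃ a b c d e f, bind₁ σf f2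
        = C a * X 0 ^ 2 + C b * X 0 * X 1 + C c * X 1 ^ 2
          + C d * X 0 * X 2 + C e * X 1 * X 2 + C f * X 2 ^ 2 := by
    refine ⟨coeff (m3 2 0 0) (bind₁ σf f2), coeff (m3 1 1 0) (bind₁ σf f2),
      coeff (m3 0 2 0) (bind₁ σf f2), coeff (m3 1 0 1) (bind₁ σf f2),
      coeff (m3 0 1 1) (bind₁ σf f2), coeff (m3 0 0 2) (bind₁ σf f2), ?_⟩
    have h' := hom2_expand _ hK2
    simp only [monomial_m3, pow_zero, pow_one, mul_one] at h'
    exact h'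
  have hc003 : c003 = 0 := by
    have h1 := congrArg (eval p001) hE3
    rw [hcomp f3, hx3] at h1
    simp [hp001] at h1
    exact h1.symm
  have hb002 : b002 = 0 := by
    have h1 := congrArg (eval p001) hE2
    rw [hcomp f2, hx2] at h1
    simp [hp001] at h1
    exact h1.symm
  have hLder : ∀ (j : Fin 3) q, eval p001 (pderiv j (bind₁ σf q))
      = ∑ i : Fin 3, eval x (pderiv i q)
          * (if j = 0 then e₀ i else if j = 1 then e'' i else x i) := by
    intro j q
    rw [pderiv_bind₁']
    simp [hpσ, hcomp]
  have hc102 : c102 = 0 := by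
    have h1 := congrArg (eval p001) (congrArg (pderiv 0) hE3)
    rw [hLder 0 f3] at h1
    simp [hp001, hu3, pderiv_X, Pi.single_apply] at h1
    exact h1.symm
  have hc012 : c012 = 1 := by
    have h1 := congrArg (eval p001) (congrArg (pderiv 1) hE3)
    rw [hLder 1 f3] at h1
    simp [hp001, hv3, pderiv_X, Pi.single_apply] at h1
    exact h1.symm
  have heul3 : (∑ i : Fin 3, eval x (pderiv i f3) * x i) = 0 := by
    have h1 := congrArg (eval p001) (congrArg (pderiv 2) hE3)
    rw [hLder 2 f3] at h1
    simp [hp001, hc003, hc102, hc012, pderiv_X, Pi.single_apply] at h1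
    convert h1 using 2
  have hb101 : b101 = 1 := by
    have h1 := congrArg (eval p001) (congrArg (pderiv 0) hE2)
    rw [hLder 0 f2] at h1
    simp [hp001, hu2, pderiv_X, Pi.single_apply] at h1
    exact h1.symm
  have hb011 : b011 = 0 := by
    have h1 := congrArg (eval p001) (congrArg (pderiv 1) hE2)
    rw [hLder 1 f2] at h1
    simp [hp001, hv2, pderiv_X, Pi.single_apply] at h1
    exact h1.symm
  have heul2 : (∑ i : Fin 3, eval x (pderiv i f2) * x i) = 0 := by
    have h1 := congrArg (eval p001) (congrArg (pderiv 2) hE2)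
    rw [hLder 2 f2] at h1
    simp [hp001, hb002, hb101, hb011, pderiv_X, Pi.single_apply] at h1
    convert h1 using 2
  -- expanded dot products
  rw [Fin.sum_univ_three] at hu2 hu3 hv2 hv3 heul2 heul3
  -- the shear parameters
  set dd : ℂ := -(2 * c201) / 3 with hdd
  set nu1 : ℂ := -(3 * dd ^ 2 + 2 * c111) / 4 with hnu1
  set la1 : ℂ := -(dd ^ 3 + 2 * c021) / 4 with hla1
  have hddE : (3 : ℂ) * dd + 2 * c201 = 0 := by rw [hdd]; ring
  have hnu1E : (4 : ℂ) * nu1 + 3 * dd ^ 2 + 2 * c111 = 0 := by rw [hnu1]; ring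
  have hla1E : (4 : ℂ) * la1 + dd ^ 3 + 2 * c021 = 0 := by rw [hla1]; ring
  have hCof : ∀ r : ℂ, (C r : MvPolynomial (Fin 2) ℂ) = C r := fun _ => rfl
  have hdC : (3 : MvPolynomial (Fin 2) ℂ) * C dd + 2 * C c201 = 0 := by
    rw [show ((3 : MvPolynomial (Fin 2) ℂ)) = C 3 from (map_ofNat C 3).symm,
      show ((2 : MvPolynomial (Fin 2) ℂ)) = C 2 from (map_ofNat C 2).symm,
      ← map_mul, ← map_mul, ← map_add, hddE, map_zero]
  have hnuC : (4 : MvPolynomial (Fin 2) ℂ) * C nu1 + 3 * (C dd) ^ 2 + 2 * C c111 = 0 := by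
    rw [show ((4 : MvPolynomial (Fin 2) ℂ)) = C 4 from (map_ofNat C 4).symm,
      show ((3 : MvPolynomial (Fin 2) ℂ)) = C 3 from (map_ofNat C 3).symm,
      show ((2 : MvPolynomial (Fin 2) ℂ)) = C 2 from (map_ofNat C 2).symm,
      ← map_mul, ← map_pow, ← map_mul, ← map_mul, ← map_add, ← map_add, hnu1E, map_zero]
  have hlaC : (4 : MvPolynomial (Fin 2) ℂ) * C la1 + (C dd) ^ 3 + 2 * C c021 = 0 := by
    rw [show ((4 : MvPolynomial (Fin 2) ℂ)) = C 4 from (map_ofNat C 4).symm,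
      show ((2 : MvPolynomial (Fin 2) ℂ)) = C 2 from (map_ofNat C 2).symm,
      ← map_mul, ← map_pow, ← map_mul, ← map_add, ← map_add, hla1E, map_zero]
  -- the coordinate vectors
  set ee : Fin 3 → ℂ := fun i => e₀ i + nu1 * x i with hee
  set ee' : Fin 3 → ℂ := fun i => e'' i + la1 * x i with hee'
  -- named polynomials
  obtain ⟨QQ, hQQ⟩ : ∃ p : MvPolynomial (Fin 2) ℂ,
      p = C c201 * X 0 ^ 2 + C c111 * X 0 * X 1 + C c021 * X 1 ^ 2 := ⟨_, rfl⟩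
  obtain ⟨GG, hGG⟩ : ∃ p : MvPolynomial (Fin 2) ℂ,
      p = C c300 * X 0 ^ 3 + C c210 * X 0 ^ 2 * X 1 + C c120 * X 0 * X 1 ^ 2
        + C c030 * X 1 ^ 3 := ⟨_, rfl⟩
  obtain ⟨BB, hBB⟩ : ∃ p : MvPolynomial (Fin 2) ℂ,
      p = C b200 * X 0 ^ 2 + C b110 * X 0 * X 1 + C b020 * X 1 ^ 2 := ⟨_, rfl⟩
  obtain ⟨WW, hWW⟩ : ∃ p : MvPolynomial (Fin 2) ℂ,
      p = C nu1 * X 0 + C la1 * X 1 := ⟨_, rfl⟩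
  obtain ⟨G2, hG2⟩ : ∃ p : MvPolynomial (Fin 2) ℂ, p = QQ + 2 * X 1 * WW := ⟨_, rfl⟩
  obtain ⟨G3, hG3⟩ : ∃ p : MvPolynomial (Fin 2) ℂ,
      p = GG + QQ * WW + X 1 * WW ^ 2 := ⟨_, rfl⟩
  obtain ⟨F2, hF2⟩ : ∃ p : MvPolynomial (Fin 2) ℂ, p = BB + X 0 * WW := ⟨_, rfl⟩
  -- homogeneity facts
  have hWh : WW.IsHomogeneous 1 := by
    rw [hWW]
    exact (isHomogeneous_C_mul_X nu1 (0 : Fin 2)).add (isHomogeneous_C_mul_X la1 (1 : Fin 2))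
  have hQh : QQ.IsHomogeneous 2 := by
    rw [hQQ]
    refine IsHomogeneous.add (IsHomogeneous.add ?_ ?_) ?_
    · exact isHomogeneous_C_mul_X_pow c201 (0 : Fin 2) 2
    · exact (isHomogeneous_C_mul_X c111 (0 : Fin 2)).mul (isHomogeneous_X ℂ (1 : Fin 2))
    · exact isHomogeneous_C_mul_X_pow c021 (1 : Fin 2) 2
  have hGh : GG.IsHomogeneous 3 := by
    rw [hGG]
    refine IsHomogeneous.add (IsHomogeneous.add (IsHomogeneous.add ?_ ?_) ?_) ?_
    · exact isHomogeneous_C_mul_X_pow c300 (0 : Fin 2) 3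
    · exact (isHomogeneous_C_mul_X_pow c210 (0 : Fin 2) 2).mul (isHomogeneous_X ℂ (1 : Fin 2))
    · exact (isHomogeneous_C_mul_X c120 (0 : Fin 2)).mul (isHomogeneous_X_pow (1 : Fin 2) 2)
    · exact isHomogeneous_C_mul_X_pow c030 (1 : Fin 2) 3
  have hBh : BB.IsHomogeneous 2 := by
    rw [hBB]
    refine IsHomogeneous.add (IsHomogeneous.add ?_ ?_) ?_
    · exact isHomogeneous_C_mul_X_pow b200 (0 : Fin 2) 2
    · exact (isHomogeneous_C_mul_X b110 (0 : Fin 2)).mul (isHomogeneous_X ℂ (1 : Fin 2))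
    · exact isHomogeneous_C_mul_X_pow b020 (1 : Fin 2) 2
  have h2C : ((2 : MvPolynomial (Fin 2) ℂ)).IsHomogeneous 0 := by
    rw [show ((2 : MvPolynomial (Fin 2) ℂ)) = C 2 from (map_ofNat C 2).symm]
    exact isHomogeneous_C _ _
  have h3C : ((3 : MvPolynomial (Fin 2) ℂ)).IsHomogeneous 0 := by
    rw [show ((3 : MvPolynomial (Fin 2) ℂ)) = C 3 from (map_ofNat C 3).symm]
    exact isHomogeneous_C _ _
  have hX0h : (X 0 : MvPolynomial (Fin 2) ℂ).IsHomogeneous 1 := isHomogeneous_X ℂ (0 : Fin 2)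
  have hX1h : (X 1 : MvPolynomial (Fin 2) ℂ).IsHomogeneous 1 := isHomogeneous_X ℂ (1 : Fin 2)
  have hG2h : G2.IsHomogeneous 2 := by
    rw [hG2]
    exact hQh.add ((h2C.mul hX1h).mul hWh)
  have hG3h : G3.IsHomogeneous 3 := by
    rw [hG3]
    refine IsHomogeneous.add (IsHomogeneous.add ?_ ?_) ?_
    · exact hGh
    · exact hQh.mul hWh
    · exact hX1h.mul (hWh.pow 2)
  have hF2h : F2.IsHomogeneous 2 := by
    rw [hF2]
    exact hBh.add (hX0h.mul hWh)
  have hh4 : (2 * X 1 * G3 + G2 ^ 2 - 3 * X 0 ^ 2 * F2).IsHomogeneous 4 := by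
    refine IsHomogeneous.sub (IsHomogeneous.add ?_ ?_) ?_
    · exact (h2C.mul hX1h).mul hG3h
    · exact hG2h.pow 2
    · exact (h3C.mul (isHomogeneous_X_pow (0 : Fin 2) 2)).mul hF2h
  have hh5 : (2 * G2 * G3 - 3 * X 0 * F2 ^ 2).IsHomogeneous 5 := by
    refine IsHomogeneous.sub ?_ ?_
    · exact (h2C.mul hG2h).mul hG3h
    · exact (h3C.mul hX0h).mul (hF2h.pow 2)
  have hh6 : (G3 ^ 2 - F2 ^ 3).IsHomogeneous 6 := by
    refine IsHomogeneous.sub ?_ ?_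
    · exact hG3h.pow 2
    · exact hF2h.pow 3
  -- substitution comparison
  have hsubst : ∀ q : MvPolynomial (Fin 3) ℂ,
      aeval (fun i : Fin 3 => C (x i) + C (ee i) * X 0 + C (ee' i) * X 1) q
        = aeval (![X 0, X 1, 1 + C nu1 * X 0 + C la1 * X 1] :
            Fin 3 → MvPolynomial (Fin 2) ℂ) (bind₁ σf q) := by
    intro q
    rw [aeval_bind₁]
    have hfun : (fun i : Fin 3 => C (x i) + C (ee i) * X 0 + C (ee' i) * X 1)
        = fun i => aeval (![X 0, X 1, 1 + C nu1 * X 0 + C la1 * X 1] :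
            Fin 3 → MvPolynomial (Fin 2) ℂ) (σf i) := by
      funext i
      show _ = aeval _ (C (e₀ i) * X 0 + C (e'' i) * X 1 + C (x i) * X 2)
      simp only [map_add, map_mul, aeval_X, aeval_C, algebraMap_eq, hee, hee']
      rw [show (![X 0, X 1, 1 + C nu1 * X 0 + C la1 * X 1] :
          Fin 3 → MvPolynomial (Fin 2) ℂ) 0 = X 0 from rfl,
        show (![X 0, X 1, 1 + C nu1 * X 0 + C la1 * X 1] :
          Fin 3 → MvPolynomial (Fin 2) ℂ) 1 = X 1 from rfl,
        show (![X 0, X 1, 1 + C nu1 * X 0 + C la1 * X 1] :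
          Fin 3 → MvPolynomial (Fin 2) ℂ) 2 = 1 + C nu1 * X 0 + C la1 * X 1 from rfl]
      push_cast [C_add, C_mul]
      ring
    rw [hfun]
  refine ⟨ee, ee', ?_, X 0 + C dd * X 1, X 1,
    (2 * X 1 * G3 + G2 ^ 2 - 3 * X 0 ^ 2 * F2) + (2 * G2 * G3 - 3 * X 0 * F2 ^ 2)
      + (G3 ^ 2 - F2 ^ 3), ?_, ?_, ?_, ?_, ?_⟩
  · -- linear independence
    rw [Fintype.linearIndependent_iff]
    intro g hg
    rw [Fin.sum_univ_three] at hg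
    rw [show (![x, ee, ee'] : Fin 3 → Fin 3 → ℂ) 0 = x from rfl,
      show (![x, ee, ee'] : Fin 3 → Fin 3 → ℂ) 1 = ee from rfl,
      show (![x, ee, ee'] : Fin 3 → Fin 3 → ℂ) 2 = ee' from rfl] at hg
    have hco : ∀ j, g 0 * x j + g 1 * (e₀ j + nu1 * x j) + g 2 * (e'' j + la1 * x j) = 0 := by
      intro j
      have h' := congrFun hg j
      simpa [hee, hee', Pi.add_apply, Pi.smul_apply, smul_eq_mul] using h'
    have hg1 : g 1 = 0 := by
      linear_combination (eval x (pderiv 0 f2)) * hco 0 + (eval x (pderiv 1 f2)) * hco 1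
        + (eval x (pderiv 2 f2)) * hco 2 - g 1 * hu2 - g 2 * hv2
        - (g 0 + g 1 * nu1 + g 2 * la1) * heul2
    have hg2 : g 2 = 0 := by
      linear_combination (eval x (pderiv 0 f3)) * hco 0 + (eval x (pderiv 1 f3)) * hco 1
        + (eval x (pderiv 2 f3)) * hco 2 - g 1 * hu3 - g 2 * hv3
        - (g 0 + g 1 * nu1 + g 2 * la1) * heul3
    have hg0 : g 0 = 0 := by
      obtain ⟨j, hj⟩ := Function.ne_iff.mp hx
      have hcj := hco j
      rw [hg1, hg2] at hcj
      simp at hcj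
      rcases hcj with h' | h'
      · exact h'
      · exact absurd h' (by simpa using hj)
    intro i
    fin_cases i <;> assumption
  · exact (isHomogeneous_X _ _).add (isHomogeneous_C_mul_X _ _)
  · exact isHomogeneous_X _ _
  · -- independence of p1 q1
    intro a b hab
    have h10 := congrArg (coeff (Finsupp.single 0 1)) hab
    have h01 := congrArg (coeff (Finsupp.single 1 1)) hab
    simp [smul_eq_C_mul, coeff_add, coeff_C_mul, coeff_X',
      Finsupp.single_eq_single_iff] at h10 h01
    refine ⟨h10, ?_⟩
    linear_combination h01 - dd * h10
  · -- support of h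
    intro d hd
    by_contra hlt
    push_neg at hlt
    apply mem_support_iff.mp hd
    rw [coeff_add, coeff_add]
    rw [hh4.coeff_eq_zero (by rw [degree_fin2]; omega),
      hh5.coeff_eq_zero (by rw [degree_fin2]; omega),
      hh6.coeff_eq_zero (by rw [degree_fin2]; omega)]
    norm_num
  · -- the main identity
    rw [map_sub, map_pow, map_pow, hsubst f3, hsubst f2, hE3, hE2]
    rw [hc102, hc012, hc003, hb101, hb011, hb002]
    simp only [map_add, map_mul, map_pow, aeval_X, aeval_C, algebraMap_eq, C_0, C_1,
      zero_mul, one_mul, add_zero, zero_add]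
    rw [show (![X 0, X 1, 1 + C nu1 * X 0 + C la1 * X 1] :
        Fin 3 → MvPolynomial (Fin 2) ℂ) 0 = X 0 from rfl,
      show (![X 0, X 1, 1 + C nu1 * X 0 + C la1 * X 1] :
        Fin 3 → MvPolynomial (Fin 2) ℂ) 1 = X 1 from rfl,
      show (![X 0, X 1, 1 + C nu1 * X 0 + C la1 * X 1] :
        Fin 3 → MvPolynomial (Fin 2) ℂ) 2 = 1 + C nu1 * X 0 + C la1 * X 1 from rfl]
    rw [hG2, hG3, hF2, hQQ, hGG, hBB, hWW]
    linear_combination (X 0 ^ 2 * X 1) * hdC + (X 0 * X 1 ^ 2) * hnuC + (X 1 ^ 3) * hlaC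
end

section
/- The bilinear system of ten equations (1+β3)v0 + 3β0·v3 = 0, (1+β3)v1 + 3β1·v3 = 0, (1+β3)v2 - 3β2·v3 = 0, β1·v0 + β0·v1 = 0, β2·v0 + (1-β0)·v2 = 0, (1-β2)·v1 + β1·v2 = 0, 2β1·v1 - v2 = L, -v0 + 2β2·v2 = L, (3+2β0)·v0 = L, 2β3·v3 = L, where L = λ - Σ_j β_j·v_j - v3 and λ ∈ ℂ \ {0}, has a solution (v0,v1,v2,v3) ≠ 0 only when β0 = β1 = β2 = β3 = 0, in which case the unique solution is (v0,v1,v2,v3) = (0,0,0,λ). -/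
/-- The bilinear system of ten equations in `v0,…,v3`, `β0,…,β3`
(with `L = λ - Σ β_j v_j - v3` and `λ ≠ 0`) has a solution only when
`β0 = β1 = β2 = β3 = 0`, in which case the unique solution is
`(v0, v1, v2, v3) = (0, 0, 0, λ)`. -/
theorem bilinear_system_solution
    (β0 β1 β2 β3 v0 v1 v2 v3 lam : ℂ) (hlam : lam ≠ 0)
    (L : ℂ) (hL : L = lam - (β0 * v0 + β1 * v1 + β2 * v2 + β3 * v3) - v3)
    (e1 : (1 + β3) * v0 + 3 * β0 * v3 = 0)
    (e2 : (1 + β3) * v1 + 3 * β1 * v3 = 0)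
    (e3 : (1 + β3) * v2 - 3 * β2 * v3 = 0)
    (e4 : β1 * v0 + β0 * v1 = 0)
    (e5 : β2 * v0 + (1 - β0) * v2 = 0)
    (e6 : (1 - β2) * v1 + β1 * v2 = 0)
    (e7 : 2 * β1 * v1 - v2 = L)
    (e8 : -v0 + 2 * β2 * v2 = L)
    (e9 : (3 + 2 * β0) * v0 = L)
    (e10 : 2 * β3 * v3 = L) :
    β0 = 0 ∧ β1 = 0 ∧ β2 = 0 ∧ β3 = 0 ∧
      v0 = 0 ∧ v1 = 0 ∧ v2 = 0 ∧ v3 = lam := by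
  have cancel : ∀ a b : ℂ, a ≠ 0 → a * b = 0 → b = 0 := fun a b ha h =>
    (mul_eq_zero.mp h).resolve_left ha
  -- Step 1: v3 ≠ 0
  have hv3 : v3 ≠ 0 := by
    intro h0
    have hL0 : L = 0 := by rw [← e10, h0]; ring
    have hv2 : v2 = 2 * β1 * v1 := by linear_combination -e7 - hL0
    have hv0 : v0 = 4 * β1 * β2 * v1 := by
      linear_combination -e8 - hL0 + 2 * β2 * hv2
    have hlam2 : lam = β1 * (4 * β0 * β2 + 1 + 2 * β2) * v1 := by
      linear_combination -hL + hL0 + β0 * hv0 + β2 * hv2 + β3 * h0 + h0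
    have hv1 : v1 ≠ 0 := by
      intro h; apply hlam; rw [hlam2, h]; ring
    have hβ1 : β1 ≠ 0 := by
      intro h; apply hlam; rw [hlam2, h]; ring
    have f4 : v1 * (4 * β1 ^ 2 * β2 + β0) = 0 := by
      linear_combination e4 - β1 * hv0
    have f5 : v1 * (β1 * (2 * β2 ^ 2 + 1 - β0)) = 0 := by
      linear_combination (e5 - β2 * hv0 - (1 - β0) * hv2) / 2
    have f6 : v1 * (1 - β2 + 2 * β1 ^ 2) = 0 := by
      linear_combination e6 - β1 * hv2
    have f9 : v1 * (β1 * (β2 * (3 + 2 * β0))) = 0 := by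
      linear_combination (e9 + hL0 - (3 + 2 * β0) * hv0) / 4
    have h4 : 4 * β1 ^ 2 * β2 + β0 = 0 := cancel _ _ hv1 f4
    have h5 : 2 * β2 ^ 2 + 1 - β0 = 0 := cancel _ _ hβ1 (cancel _ _ hv1 f5)
    have h6 : 1 - β2 + 2 * β1 ^ 2 = 0 := cancel _ _ hv1 f6
    have h9 : β2 * (3 + 2 * β0) = 0 := cancel _ _ hβ1 (cancel _ _ hv1 f9)
    have quad : 4 * β2 ^ 2 - 2 * β2 + 1 = 0 := by
      linear_combination h4 + h5 - 2 * β2 * h6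
    rcases mul_eq_zero.mp h9 with hb2 | hb0
    · exact one_ne_zero (show (1:ℂ) = 0 by linear_combination quad - (4 * β2 - 2) * hb2)
    · have hq : β2 = -2 := by
        linear_combination (quad - 2 * h5 - hb0) / (-2)
      have h21 : (21 : ℂ) = 0 := by
        linear_combination 2 * h5 + hb0 - 4 * (β2 - 2) * hq
      norm_num at h21
  -- Step 2: 1 + β3 ≠ 0
  have hu : (1 + β3) ≠ 0 := by
    intro hu0
    have hb0 : β0 = 0 := cancel _ _ hv3 (show v3 * β0 = 0 by
      linear_combination (e1 - v0 * hu0) / 3)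
    have hb2 : β2 = 0 := cancel _ _ hv3 (show v3 * β2 = 0 by
      linear_combination -(e3 - v2 * hu0) / 3)
    have hv0 : v0 = 0 := by
      linear_combination (e9 - e8 - 2 * v0 * hb0 + 2 * v2 * hb2) / 4
    have hL0 : L = 0 := by linear_combination -e9 + (3 + 2 * β0) * hv0
    exact hv3 (by linear_combination (-e10 - hL0 + 2 * v3 * hu0) / 2)
  -- Step 3: main case
  have g1 : β0 * β1 = 0 := cancel _ _ hv3 (show v3 * (β0 * β1) = 0 by
    linear_combination (β1 * e1 + β0 * e2 - (1 + β3) * e4) / 6)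
  have g2 : β2 * (1 - 2 * β0) = 0 := cancel _ _ hv3 (show v3 * (β2 * (1 - 2 * β0)) = 0 by
    linear_combination ((1 + β3) * e5 - β2 * e1 - (1 - β0) * e3) / 3)
  have g3 : β1 * (2 * β2 - 1) = 0 := cancel _ _ hv3 (show v3 * (β1 * (2 * β2 - 1)) = 0 by
    linear_combination ((1 + β3) * e6 - (1 - β2) * e2 - β1 * e3) / 3)
  have g4 : β2 ^ 2 + β0 * (2 + β0) = 0 := cancel _ _ hv3
    (show v3 * (β2 ^ 2 + β0 * (2 + β0)) = 0 by
      linear_combination ((2 + β0) * e1 - β2 * e3 - (1 + β3) * (e9 - e8) / 2) / 3)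
  have g5 : β0 * (3 + 2 * β0) - 2 * β1 ^ 2 - β2 = 0 := cancel _ _ hv3
    (show v3 * (β0 * (3 + 2 * β0) - 2 * β1 ^ 2 - β2) = 0 by
      linear_combination ((1 + β3) * (e7 - e9) - 2 * β1 * e2 + e3 + (3 + 2 * β0) * e1) / 3)
  obtain hβ2 | hb := mul_eq_zero.mp g2
  · have hβ1 : β1 = 0 := by linear_combination 2 * β1 * hβ2 - g3
    have hβ0 : β0 = 0 := by
      linear_combination 2 * g4 - g5 - 2 * β2 * hβ2 - 2 * β1 * hβ1 - hβ2
    have hv0 : v0 = 0 := cancel _ _ hu (by linear_combination e1 - 3 * v3 * hβ0)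
    have hv1 : v1 = 0 := cancel _ _ hu (by linear_combination e2 - 3 * v3 * hβ1)
    have hv2 : v2 = 0 := cancel _ _ hu (by linear_combination e3 + 3 * v3 * hβ2)
    have hL0 : L = 0 := by linear_combination -e9 + (3 + 2 * β0) * hv0
    have hβ3 : β3 = 0 := cancel _ _ hv3 (show v3 * β3 = 0 by
      linear_combination (e10 + hL0) / 2)
    have hv3lam : v3 = lam := by
      linear_combination hL - hL0 - v0 * hβ0 - v1 * hβ1 - v2 * hβ2 - v3 * hβ3
    exact ⟨hβ0, hβ1, hβ2, hβ3, hv0, hv1, hv2, hv3lam⟩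
  · have hβ1 : β1 = 0 := by linear_combination 2 * g1 + β1 * hb
    have hc : β2 = 2 := by linear_combination -g5 - 2 * β1 * hβ1 - (β0 + 2) * hb
    exact absurd (show (21 : ℂ) / 4 = 0 by
      linear_combination g4 + ((2 * β0 + 5) / 4) * hb - (β2 + 2) * hc) (by norm_num)
end

section
/- Let C ⊂ ℙ^3 be the complete intersection of the cubic F3 = x3^3 + (x0^2+x1^2-x2^2)x3 + x0^3 + x0·x2^2 - x1^2·x2 = 0 and the quadric ∂F3/∂x3 = 3x3^2 + x0^2 + x1^2 - x2^2 = 0. Then C is a smooth curve. -/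
open MvPolynomial

/-- The cubic form `F3 = x3^3 + (x0^2+x1^2-x2^2) x3 + x0^3 + x0 x2^2 - x1^2 x2`. -/
noncomputable def F3 : MvPolynomial (Fin 4) ℂ :=
  X 3 ^ 3 + (X 0 ^ 2 + X 1 ^ 2 - X 2 ^ 2) * X 3
    + X 0 ^ 3 + X 0 * X 2 ^ 2 - X 1 ^ 2 * X 2

lemma c3aux : (3 : MvPolynomial (Fin 4) ℂ) = C 3 := (map_ofNat C 3).symm

/-- The curve `C ⊂ ℙ^3` cut out by `F3 = 0` and `∂F3/∂x3 = 0` is smooth: at every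
nonzero point of `C` the two gradients are linearly independent, i.e. the 2×4
Jacobian matrix of `(F3, ∂F3/∂x3)` has rank 2 there. -/
theorem canonical_curve_smooth :
    ∀ x : Fin 4 → ℂ, x ≠ 0 →
      eval x F3 = 0 → eval x (pderiv 3 F3) = 0 →
      ∀ a b : ℂ,
        (∀ i : Fin 4,
          a * eval x (pderiv i F3) + b * eval x (pderiv i (pderiv 3 F3)) = 0) →
        a = 0 ∧ b = 0 := by
  intro x hx hF hG a b h
  have e0 : eval x (pderiv (0:Fin 4) F3) = 2*x 0*x 3 + 3*x 0^2 + x 2^2 := by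
    simp [F3, pderiv_X, c3aux, pderiv_C]; try ring
  have e1 : eval x (pderiv (1:Fin 4) F3) = 2*x 1*x 3 - 2*x 1*x 2 := by
    simp [F3, pderiv_X, c3aux, pderiv_C]; try ring
  have e2 : eval x (pderiv (2:Fin 4) F3) = -2*x 2*x 3 + 2*x 0*x 2 - x 1^2 := by
    simp [F3, pderiv_X, c3aux, pderiv_C]; try ring
  have e3 : eval x (pderiv (3:Fin 4) F3) = 3*x 3^2 + x 0^2 + x 1^2 - x 2^2 := by
    simp [F3, pderiv_X, c3aux, pderiv_C]; try ring
  have d0 : eval x (pderiv (0:Fin 4) (pderiv 3 F3)) = 2*x 0 := by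
    simp [F3, pderiv_X, c3aux, pderiv_C]; try ring
  have d1 : eval x (pderiv (1:Fin 4) (pderiv 3 F3)) = 2*x 1 := by
    simp [F3, pderiv_X, c3aux, pderiv_C]; try ring
  have d2 : eval x (pderiv (2:Fin 4) (pderiv 3 F3)) = -(2*x 2) := by
    simp [F3, pderiv_X, c3aux, pderiv_C]; try ring
  have d3 : eval x (pderiv (3:Fin 4) (pderiv 3 F3)) = 6*x 3 := by
    simp [F3, pderiv_X, c3aux, pderiv_C]; try ring
  have hQ : 3*x 3^2 + x 0^2 + x 1^2 - x 2^2 = 0 := by rw [e3] at hG; exact hG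
  have hF' : x 3^3 + (x 0^2 + x 1^2 - x 2^2)*x 3 + x 0^3 + x 0*x 2^2 - x 1^2*x 2 = 0 := by
    have : eval x F3 = x 3^3 + (x 0^2 + x 1^2 - x 2^2)*x 3 + x 0^3 + x 0*x 2^2 - x 1^2*x 2 := by
      simp [F3]
    rw [this] at hF; exact hF
  have h0 := h 0; rw [e0, d0] at h0
  have h1 := h 1; rw [e1, d1] at h1
  have h2 := h 2; rw [e2, d2] at h2
  have h3 := h 3; rw [e3, d3] at h3
  have hzero : x 0 = 0 → x 1 = 0 → x 2 = 0 → x 3 = 0 → False := by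
    intro a0 a1 a2 a3
    apply hx
    funext i
    fin_cases i <;> first | exact a0 | exact a1 | exact a2 | exact a3
  have hbx3 : b * x 3 = 0 := by linear_combination h3/6 - (a/6)*hQ
  rcases mul_eq_zero.mp hbx3 with hb | h3z
  · -- b = 0 : need a = 0, i.e. ∇F ≠ 0 on C \ {0}
    subst hb
    refine ⟨?_, rfl⟩
    by_contra ha
    have g0 : 2*x 0*x 3 + 3*x 0^2 + x 2^2 = 0 :=
      (mul_eq_zero.mp (by linear_combination h0)).resolve_left ha
    have g1 : 2*x 1*x 3 - 2*x 1*x 2 = 0 :=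
      (mul_eq_zero.mp (by linear_combination h1)).resolve_left ha
    have g2 : -2*x 2*x 3 + 2*x 0*x 2 - x 1^2 = 0 :=
      (mul_eq_zero.mp (by linear_combination h2)).resolve_left ha
    rcases mul_eq_zero.mp (show x 1 * (x 3 - x 2) = 0 by linear_combination g1/2)
      with h1z | h32
    · -- x1 = 0
      rcases mul_eq_zero.mp (show x 2 * (x 0 - x 3) = 0 by
          linear_combination g2/2 + (x 1/2)*h1z) with h2z | h03
      · -- x2 = 0
        rcases mul_eq_zero.mp (show x 0 * (2*x 3 + 3*x 0) = 0 by
            linear_combination g0 - x 2*h2z) with h0z | hlin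
        · have h3z : x 3 = 0 := by
            have hsq : x 3^2 = 0 := by
              linear_combination hQ/3 - (x 0/3)*h0z - (x 1/3)*h1z + (x 2/3)*h2z
            exact pow_eq_zero_iff two_ne_zero |>.mp hsq
          exact hzero h0z h1z h2z h3z
        · have h31 : (31:ℂ) * x 0^2 = 0 := by
            linear_combination 4*hQ - 4*(x 1)*h1z + 4*(x 2)*h2z - (3*(2*x 3 - 3*x 0))*hlin
          have h0z : x 0 = 0 := by
            have := (mul_eq_zero.mp h31).resolve_left (by norm_num)
            exact pow_eq_zero_iff two_ne_zero |>.mp this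
          have h3z : x 3 = 0 := by linear_combination hlin/2 - (3/2)*h0z
          exact hzero h0z h1z h2z h3z
      · -- x0 = x3
        have h0z : x 0 = 0 := by
          have h9 : (9:ℂ)*x 0^2 = 0 := by
            linear_combination g0 + hQ - x 1*h1z + (2*x 0)*h03 + (3*(x 0 + x 3))*h03
          have := (mul_eq_zero.mp h9).resolve_left (by norm_num)
          exact pow_eq_zero_iff two_ne_zero |>.mp this
        have h3z : x 3 = 0 := by linear_combination h0z - h03
        have h2z : x 2 = 0 := by
          have hsq : x 2^2 = 0 := by
            linear_combination -hQ + (3*x 3)*h3z + x 0*h0z + x 1*h1z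
          exact pow_eq_zero_iff two_ne_zero |>.mp hsq
        exact hzero h0z h1z h2z h3z
    · -- x3 = x2
      have hfac : x 0 * (x 0 + 2*x 2) = 0 := by
        linear_combination hQ + g2 - (3*(x 3 + x 2))*h32 + (2*x 2)*h32
      rcases mul_eq_zero.mp hfac with h0z | hsum
      · have h2z : x 2 = 0 := by
          have hsq : x 2^2 = 0 := by linear_combination g0 - (2*x 3 + 3*x 0)*h0z
          exact pow_eq_zero_iff two_ne_zero |>.mp hsq
        have h3z : x 3 = 0 := by linear_combination h32 + h2z
        have h1z : x 1 = 0 := by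
          have hsq : x 1^2 = 0 := by
            linear_combination hQ - (3*x 3)*h3z - x 0*h0z + x 2*h2z
          exact pow_eq_zero_iff two_ne_zero |>.mp hsq
        exact hzero h0z h1z h2z h3z
      · have h2z : x 2 = 0 := by
          have h9 : (9:ℂ)*x 2^2 = 0 := by
            linear_combination g0 - (2*x 0)*h32 - (3*(x 0 - 2*x 2) + 2*x 2)*hsum
          have := (mul_eq_zero.mp h9).resolve_left (by norm_num)
          exact pow_eq_zero_iff two_ne_zero |>.mp this
        have h3z : x 3 = 0 := by linear_combination h32 + h2z
        have h0z : x 0 = 0 := by linear_combination hsum - 2*h2z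
        have h1z : x 1 = 0 := by
          have hsq : x 1^2 = 0 := by
            linear_combination hQ - (3*x 3)*h3z - x 0*h0z + x 2*h2z
          exact pow_eq_zero_iff two_ne_zero |>.mp hsq
        exact hzero h0z h1z h2z h3z
  · -- x3 = 0
    have hP : x 0^3 + x 0*x 2^2 - x 1^2*x 2 = 0 := by
      linear_combination hF' - (x 3^2 + (x 0^2 + x 1^2 - x 2^2))*h3z
    have hQ0 : x 0^2 + x 1^2 - x 2^2 = 0 := by linear_combination hQ - (3*x 3)*h3z
    have hx2 : x 2 ≠ 0 := by
      intro h2z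
      have h0z : x 0 = 0 := by
        have hc : x 0^3 = 0 := by linear_combination hP - (x 0*x 2 - x 1^2)*h2z
        exact pow_eq_zero_iff three_ne_zero |>.mp hc
      have h1z : x 1 = 0 := by
        have hsq : x 1^2 = 0 := by linear_combination hQ0 - x 0*h0z + x 2*h2z
        exact pow_eq_zero_iff two_ne_zero |>.mp hsq
      exact hzero h0z h1z h2z h3z
    have hx1 : x 1 ≠ 0 := by
      intro h1z
      have hfac : x 0 * (2*x 2^2) = 0 := by
        linear_combination hP + (x 2*x 1)*h1z - x 0*hQ0 + (x 0*x 1)*h1z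
      rcases mul_eq_zero.mp hfac with h0z | h2sq
      · have hsq : x 2^2 = 0 := by linear_combination -hQ0 + x 0*h0z + x 1*h1z
        exact hx2 (pow_eq_zero_iff two_ne_zero |>.mp hsq)
      · have hsq : x 2^2 = 0 := by linear_combination h2sq/2
        exact hx2 (pow_eq_zero_iff two_ne_zero |>.mp hsq)
    have hb : b = a * x 2 := by
      have hf : x 1 * (2*(b - a*x 2)) = 0 := by linear_combination h1 - (2*a*x 1)*h3z
      have := (mul_eq_zero.mp hf).resolve_left hx1
      linear_combination this/2
    have h2' : a * (x 0^2 + 2*x 0*x 2 - 3*x 2^2) = 0 := by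
      linear_combination h2 + (2*a*x 2)*h3z + (2*x 2)*hb + a*hQ0
    have h0'' : a * (3*x 0^2 + 2*x 0*x 2 + x 2^2) = 0 := by
      linear_combination h0 - (2*a*x 0)*h3z - (2*x 0)*hb
    have ha : a = 0 := by
      by_contra ha
      have A : 3*x 0^2 + 2*x 0*x 2 + x 2^2 = 0 := (mul_eq_zero.mp h0'').resolve_left ha
      have B : x 0^2 + 2*x 0*x 2 - 3*x 2^2 = 0 := (mul_eq_zero.mp h2').resolve_left ha
      have hsq : x 0^2 = -2*x 2^2 := by linear_combination A/2 - B/2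
      have h5 : 2*x 0*x 2 = 5*x 2^2 := by linear_combination B - hsq
      have h33 : (33:ℂ)*x 2^4 = 0 := by
        linear_combination (-(2*x 0*x 2 + 5*x 2^2))*h5 + (4*x 2^2)*hsq
      have hx24 : x 2^4 = 0 := (mul_eq_zero.mp h33).resolve_left (by norm_num)
      exact hx2 (pow_eq_zero_iff (by norm_num) |>.mp hx24)
    exact ⟨ha, by rw [hb, ha, zero_mul]⟩
end
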